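/- In the RangeMaxRegister state machine, every value returned by an RMaxRead transition is either the initial value 1 or the argument of some earlier RMaxWrite transition in the execution. -/

import Mathlib

/-- Labels for the RangeMaxRegister state machine: `write i x` is
`RMaxWrite_i(x)` and `read i v` is an `RMaxRead_i` returning `v`. -/
inductive RLab (n : ℕ) where
  | write (i : Fin n) (x : ℕ) : RLab n
  | read (i : Fin n) (v : ℕ) : RLab n

/-- Transition relation of the RangeMaxRegister.  States are `n`-vectors of
naturals.  `RMaxWrite_i(x)` replaces `r_i` by `x` if `x > r_i` and otherwise
is a no-op (i.e. it replaces `r_i` by `max r_i x`).  `RMaxRead_i`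
nondeterministically returns some `v` with `r_i ≤ v ≤ max (r_0, …, r_{n-1})`
(the upper bound encoded as `∃ j, v ≤ r_j`) and replaces `r_i` by `v`. -/
inductive RStep {n : ℕ} : (Fin n → ℕ) → RLab n → (Fin n → ℕ) → Prop
  | write (s : Fin n → ℕ) (i : Fin n) (x : ℕ) :
      RStep s (.write i x) (Function.update s i (max (s i) x))
  | read (s : Fin n → ℕ) (i : Fin n) (v : ℕ)
      (h1 : s i ≤ v) (h2 : ∃ j, v ≤ s j) :
      RStep s (.read i v) (Function.update s i v)

/-- Finite sequences of RangeMaxRegister transitions from `s` to `s''`. -/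
inductive RSteps {n : ℕ} : (Fin n → ℕ) → List (RLab n) → (Fin n → ℕ) → Prop
  | nil (s : Fin n → ℕ) : RSteps s [] s
  | cons {s : Fin n → ℕ} {l : RLab n} {s' : Fin n → ℕ} {tr : List (RLab n)}
      {s'' : Fin n → ℕ} :
      RStep s l s' → RSteps s' tr s'' → RSteps s (l :: tr) s''

/-- Arguments of the RMaxWrite transitions of a trace, in order. -/
def rwrites {n : ℕ} (tr : List (RLab n)) : List ℕ :=
  tr.filterMap fun l => match l with | .write _ x => some x | _ => none

lemma rangemax_aux {n : ℕ} {tr : List (RLab n)} {s s' : Fin n → ℕ}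
    (h : RSteps s tr s') :
    ∀ M, (∀ j, s j ≤ M) → ∀ a i v, tr[a]? = some (.read i v) →
      v ≤ (rwrites (tr.take a)).foldl max M := by
  induction h with
  | nil s => intro M _ a i v ha; simp at ha
  | @cons s l s1 tr s'' hstep htr ih =>
    intro M hM a i v ha
    cases a with
    | zero =>
      simp only [List.getElem?_cons_zero] at ha
      cases hstep with
      | write => simp at ha
      | read i' v' h1 h2 =>
        simp only [Option.some.injEq, RLab.read.injEq] at ha
        obtain ⟨j, hj⟩ := h2
        simp [rwrites]
        exact ha.2 ▸ le_trans hj (hM j)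
    | succ a' =>
      simp only [List.getElem?_cons_succ] at ha
      cases hstep with
      | write i' x =>
        have : ∀ j, Function.update s i' (max (s i') x) j ≤ max M x := by
          intro j
          rcases eq_or_ne j i' with rfl | hne
          · simp [Function.update_self]
            have := hM j; omega
          · simp [Function.update_of_ne hne]
            exact Or.inl (hM j)
        have := ih (max M x) this a' i v ha
        simpa [rwrites, List.take, List.filterMap] using this
      | read i' v' h1 h2 =>
        have hle : ∀ j, Function.update s i' v' j ≤ M := by
          intro j
          rcases eq_or_ne j i' with rfl | hne
          · obtain ⟨k, hk⟩ := h2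
            simp [Function.update_self]
            exact le_trans hk (hM k)
          · simp [Function.update_of_ne hne]; exact hM j
        have := ih M hle a' i v ha
        simpa [rwrites, List.take, List.filterMap] using this

/-- every value returned by an RMaxRead transition in an
execution from the initial state `(1, …, 1)` is at most the maximum of the
initial value 1 and the arguments of the RMaxWrite transitions that occur
earlier in the execution. -/
theorem rangemax_read_bounded_by_earlier_writes {n : ℕ}
    (tr : List (RLab n)) (s : Fin n → ℕ)
    (h : RSteps (fun _ => 1) tr s)
    (a : ℕ) (i : Fin n) (v : ℕ)
    (ha : tr[a]? = some (.read i v)) :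
    v ≤ (rwrites (tr.take a)).foldl max 1 := by
  exact rangemax_aux h 1 (fun j => le_refl 1) a i v ha
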